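/- In the compatibility condition L_n^{m+1}·M_n^m = M_{n+1}^m·L_n^m with L_n^m = u_n^m·R(κ) and M_n^m = H_n^m·I where H_n^m = 1 + (σ/κ²)(u_n^m - 2cos κ + 1/u_{n-1}^m), one has equivalence with the discrete Burgers equation u_n^{m+1}/u_n^m = H_{n+1}^m / H_n^m. -/
import Mathlib


/-- The discrete compatibility condition `L_n^{m+1} M_n^m = M_{n+1}^m L_n^m`
with `L_n^m = u_n^m R(κ)` and `M_n^m = H_n^m I` is equivalent to the discrete
Burgers equation `u_n^{m+1}/u_n^m = H_{n+1}^m/H_n^m`. -/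
theorem discrete_compatibility_iff_dBurgers
    (σ κ : ℝ) (hκ : 0 < κ)
    (u : ℤ → ℤ → ℝ) (hu : ∀ n m, 0 < u n m)
    (H : ℤ → ℤ → ℝ)
    (hH : ∀ n m : ℤ, H n m = 1 + σ / κ ^ 2 * (u n m - 2 * Real.cos κ + 1 / u (n - 1) m))
    (hH0 : ∀ n m, H n m ≠ 0)
    (R : Matrix (Fin 2) (Fin 2) ℝ)
    (hR : R = !![Real.cos κ, -Real.sin κ; Real.sin κ, Real.cos κ])
    (L M : ℤ → ℤ → Matrix (Fin 2) (Fin 2) ℝ)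
    (hL : ∀ n m, L n m = u n m • R)
    (hM : ∀ n m, M n m = H n m • (1 : Matrix (Fin 2) (Fin 2) ℝ)) :
    (∀ n m : ℤ, L n (m + 1) * M n m = M (n + 1) m * L n m)
      ↔ (∀ n m : ℤ, u n (m + 1) / u n m = H (n + 1) m / H n m) := by
  have hRne : R ≠ 0 := by
    intro h
    have h00 : R 0 0 = 0 := by rw [h]; rfl
    have h10 : R 1 0 = 0 := by rw [h]; rfl
    rw [hR] at h00 h10
    simp [Matrix.cons_val_zero, Matrix.cons_val_one] at h00 h10
    have := Real.sin_sq_add_cos_sq κ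
    rw [h00, h10] at this
    norm_num at this
  have hmat : ∀ n m : ℤ, L n (m + 1) * M n m = (u n (m + 1) * H n m) • R ∧
      M (n + 1) m * L n m = (H (n + 1) m * u n m) • R := by
    intro n m
    rw [hL, hL, hM, hM]
    constructor
    · rw [smul_mul_assoc, mul_smul_comm, mul_one, smul_smul]
    · rw [smul_mul_assoc, one_mul, smul_smul]
  constructor
  · intro h n m
    have hnm := h n m
    rw [(hmat n m).1, (hmat n m).2] at hnm
    have key : u n (m + 1) * H n m = H (n + 1) m * u n m :=
      smul_left_injective ℝ hRne hnm
    field_simp [(hu n m).ne', hH0 n m]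
    linarith [key]
  · intro h n m
    have hnm := h n m
    have key : u n (m + 1) * H n m = H (n + 1) m * u n m := by
      field_simp [(hu n m).ne', hH0 n m] at hnm
      linarith [hnm]
    rw [(hmat n m).1, (hmat n m).2, key]
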